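/- Let L and M be positive integers and a, b, x real numbers, and set ℓ = 2L, m = 2M. Then det( I_m ⊗ T_ℓ(-a,x,a) + T_m(-b,0,b) ⊗ J_ℓ ) = ∏_{s=1}^{M} ∏_{k=1}^{L} ( x^2 + 4a^2 cos^2(kπ/(2L+1)) + 4b^2 cos^2(sπ/(2M+1)) )^2. (This is the partition function of the monopole-dimer model on the two-dimensional grid graph P_ℓ □ P_m with vertex weights x and edge weights a and b in the two directions.) -/

import Mathlib

open scoped Kronecker

/-- The `k × k` tridiagonal Toeplitz matrix `T_k(-s, z, s)` with diagonal entries `z`,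
superdiagonal entries `s` and subdiagonal entries `-s`. -/
noncomputable def tridiag (k : ℕ) (s z : ℂ) : Matrix (Fin k) (Fin k) ℂ :=
  Matrix.of fun i j =>
    if (i : ℕ) = (j : ℕ) then z
    else if (i : ℕ) + 1 = (j : ℕ) then s
    else if (j : ℕ) + 1 = (i : ℕ) then -s
    else 0

/-- The `k × k` anti-diagonal matrix `J_k` with all anti-diagonal entries 1. -/
noncomputable def antidiag (k : ℕ) : Matrix (Fin k) (Fin k) ℂ :=
  Matrix.of fun i j => if (i : ℕ) + (j : ℕ) + 1 = k then 1 else 0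

open Complex

namespace Grid2D

noncomputable def θr (n : ℕ) : ℝ := Real.pi / (n+1)

noncomputable def θ (n : ℕ) : ℂ := ((θr n : ℝ) : ℂ)

noncomputable def ε (n k : ℕ) : ℂ := Complex.exp (((k+1) * θr n : ℝ) * I)

lemma eps_ne_zero (n k : ℕ) : ε n k ≠ 0 := Complex.exp_ne_zero _

lemma exp_real_ne_one {t : ℝ} (h0 : 0 < t) (h2 : t < 2 * Real.pi) :
    Complex.exp ((t : ℂ) * I) ≠ 1 := by
  intro h
  rw [Complex.exp_eq_one_iff] at h
  obtain ⟨m, hm⟩ := h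
  have h2' : (t : ℂ) * I = ((m : ℂ) * (2 * Real.pi)) * I := by rw [hm]; ring
  have hI : ((t : ℂ)) = (m : ℂ) * (2 * Real.pi) := mul_right_cancel₀ Complex.I_ne_zero h2'
  have ht : t = m * (2 * Real.pi) := by exact_mod_cast hI
  have hpi := Real.pi_pos
  rcases le_or_gt m 0 with hm0 | hm0
  · have : (m : ℝ) ≤ 0 := by exact_mod_cast hm0
    nlinarith
  · have : (1 : ℝ) ≤ (m : ℝ) := by exact_mod_cast hm0
    nlinarith

lemma eps_pow (n k : ℕ) : (ε n k) ^ (n + 1) = (-1) ^ (k + 1) := by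
  rw [ε, ← Complex.exp_nat_mul]
  have : ((n + 1 : ℕ) : ℂ) * (((k+1) * θr n : ℝ) * I) = ((k+1 : ℕ) : ℂ) * (Real.pi * I) := by
    have hn : ((n:ℂ) + 1) ≠ 0 := by
      have : ((n+1 : ℕ) : ℂ) ≠ 0 := Nat.cast_ne_zero.mpr (Nat.succ_ne_zero n)
      push_cast at this; exact this
    have hn' : ((1:ℂ) + n) ≠ 0 := by rwa [add_comm] at hn
    rw [θr]; push_cast; field_simp
  rw [this, Complex.exp_nat_mul, Complex.exp_pi_mul_I]

lemma sum_pow_pair (n : ℕ) {z w : ℂ} (hz0 : z ≠ 0) (hz1 : z ≠ 1)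
    (hw : z ^ (n + 1) = w) (hw2 : w * w = 1) :
    (∑ j : Fin n, z ^ ((j : ℕ) + 1)) + (∑ j : Fin n, (z⁻¹) ^ ((j : ℕ) + 1)) = -(w + 1) := by
  have hw0 : w ≠ 0 := by
    intro h; rw [h, mul_zero] at hw2; exact zero_ne_one hw2
  have hzi1 : z⁻¹ ≠ 1 := by
    intro h; exact hz1 (by rw [← inv_inv z, h, inv_one])
  have h1 : (∑ j : Fin n, z ^ ((j : ℕ) + 1)) = z * ((z ^ n - 1) / (z - 1)) := by
    rw [Fin.sum_univ_eq_sum_range (fun j => z ^ (j + 1)) n, ← geom_sum_eq hz1 n,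
      Finset.mul_sum]
    exact Finset.sum_congr rfl fun i _ => by ring
  have h2 : (∑ j : Fin n, (z⁻¹) ^ ((j : ℕ) + 1)) = z⁻¹ * ((z⁻¹ ^ n - 1) / (z⁻¹ - 1)) := by
    rw [Fin.sum_univ_eq_sum_range (fun j => (z⁻¹) ^ (j + 1)) n, ← geom_sum_eq hzi1 n,
      Finset.mul_sum]
    exact Finset.sum_congr rfl fun i _ => by ring
  have hzn : z ^ n = w / z := by
    field_simp [← hw, pow_succ]
    rw [← hw, pow_succ]
  have hz1' : z - 1 ≠ 0 := sub_ne_zero.mpr hz1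
  have hzi1' : z⁻¹ - 1 ≠ 0 := sub_ne_zero.mpr hzi1
  rw [h1, h2, inv_pow, hzn]
  have h1z : (1 : ℂ) - z ≠ 0 := fun h => hz1 (by linear_combination -h)
  have hq : (-(z*w) + w) ≠ 0 := by
    have e : -(z*w) + w = w * (1 - z) := by ring
    rw [e]; exact mul_ne_zero hw0 h1z
  field_simp [hq]
  linear_combination (z - z^2) * hw2

end Grid2D

namespace Grid2D

lemma sin_expand (n j k : ℕ) :
    Complex.sin ((((j+1)*(k+1) : ℕ) : ℂ) * θ n)
      = ((ε n k)⁻¹ ^ (j+1) - (ε n k) ^ (j+1)) * I / 2 := by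
  have harg : ((((j+1)*(k+1) : ℕ) : ℂ) * θ n) * I = ((j+1 : ℕ) : ℂ) * ((((k:ℕ)+1) * θr n : ℝ) * I) := by
    rw [θ]; push_cast; ring
  have harg' : -((((j+1)*(k+1) : ℕ) : ℂ) * θ n) * I = -(((j+1 : ℕ) : ℂ) * ((((k:ℕ)+1) * θr n : ℝ) * I)) := by
    rw [θ]; push_cast; ring
  rw [Complex.sin, harg, harg', Complex.exp_neg, Complex.exp_nat_mul, ← inv_pow]
  rfl

lemma eps_mul (n k k' : ℕ) :
    ε n k * ε n k' = Complex.exp ((((k+k'+2) * θr n : ℝ)) * I) := by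
  rw [ε, ε, ← Complex.exp_add]
  congr 1
  push_cast; ring

lemma eps_ne (n : ℕ) {k k' : ℕ} (hk : k < n) (hk' : k' < n) (hne : k ≠ k') :
    ε n k ≠ ε n k' := by
  have key : ∀ p q : ℕ, q < p → p < n → ε n p ≠ ε n q := by
    intro p q hqp hpn heq
    have hmul : ε n p * (ε n q)⁻¹ = Complex.exp ((((p - q : ℕ) * θr n : ℝ)) * I) := by
      rw [ε, ε, ← Complex.exp_neg, ← Complex.exp_add]
      congr 1
      have : ((p - q : ℕ) : ℝ) = (p : ℝ) - q := by
        rw [Nat.cast_sub hqp.le]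
      rw [← neg_mul, ← add_mul]
      congr 1
      rw [← Complex.ofReal_neg, ← Complex.ofReal_add]
      congr 1
      rw [this]; ring
    have hθpos : 0 < θr n := by
      rw [θr]; positivity
    have h1 : Complex.exp ((((p - q : ℕ) * θr n : ℝ)) * I) ≠ 1 := by
      apply exp_real_ne_one
      · have : 0 < (p - q : ℕ) := by omega
        positivity
      · rw [θr]
        rw [div_eq_mul_inv, ← mul_assoc]
        have hlt : ((p - q : ℕ) : ℝ) * Real.pi < 2 * ((n : ℝ) + 1) * Real.pi := by
          have : ((p - q : ℕ) : ℝ) < 2 * ((n:ℝ)+1) := by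
            have : (p - q : ℕ) < 2 * (n+1) := by omega
            exact_mod_cast this
          nlinarith [Real.pi_pos]
        calc ((p - q : ℕ) : ℝ) * Real.pi * ((n:ℝ)+1)⁻¹ < 2 * ((n : ℝ) + 1) * Real.pi * ((n:ℝ)+1)⁻¹ := by
              apply mul_lt_mul_of_pos_right hlt
              positivity
          _ = 2 * Real.pi := by
              rw [mul_assoc, mul_assoc]
              congr 1
              rw [mul_comm, mul_assoc, inv_mul_cancel₀ (by positivity : ((n:ℝ)+1) ≠ 0), mul_one]
    rw [heq, mul_inv_cancel₀ (eps_ne_zero n q)] at hmul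
    exact h1 hmul.symm
  rcases Nat.lt_or_ge k k' with h | h
  · exact (key k' k h hk').symm
  · exact key k k' (lt_of_le_of_ne h (Ne.symm hne)) hk

lemma eps_mul_ne_one (n : ℕ) {k k' : ℕ} (hk : k < n) (hk' : k' < n) :
    ε n k * ε n k' ≠ 1 := by
  rw [eps_mul]
  apply exp_real_ne_one
  · have : 0 < θr n := by rw [θr]; positivity
    positivity
  · rw [θr, div_eq_mul_inv, ← mul_assoc]
    have hlt : ((k + k' + 2 : ℕ) : ℝ) * Real.pi < 2 * ((n : ℝ) + 1) * Real.pi := by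
      have h2 : ((k + k' + 2 : ℕ) : ℝ) < 2 * ((n:ℝ)+1) := by
        have : (k + k' + 2 : ℕ) < 2 * (n+1) := by omega
        exact_mod_cast this
      nlinarith [Real.pi_pos]
    push_cast
    push_cast at hlt
    calc ((k:ℝ)+(k':ℝ)+2) * Real.pi * ((n:ℝ)+1)⁻¹ < 2 * ((n : ℝ) + 1) * Real.pi * ((n:ℝ)+1)⁻¹ := by
          apply mul_lt_mul_of_pos_right hlt
          positivity
      _ = 2 * Real.pi := by
          rw [mul_assoc, mul_assoc]
          congr 1
          rw [mul_comm, mul_assoc, inv_mul_cancel₀ (by positivity : ((n:ℝ)+1) ≠ 0), mul_one]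

end Grid2D

namespace Grid2D

lemma neg_one_pow_inv (e : ℕ) : (((-1 : ℂ)) ^ e)⁻¹ = (-1) ^ e := by
  rw [← inv_pow, inv_neg, inv_one]

lemma alg_aux (u v : ℂ) (hu : u ≠ 0) (hv : v ≠ 0) :
    (u⁻¹ - u) * I / 2 * ((v⁻¹ - v) * I / 2)
      = -(1/4) * (u * v + (u * v)⁻¹) + (1/4) * (u * v⁻¹ + (u * v⁻¹)⁻¹) := by
  have hI := Complex.I_mul_I
  have key : ∀ A B : ℂ, (A * I / 2) * (B * I / 2) = -(A * B) / 4 := by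
    intro A B
    linear_combination (A * B / 4) * hI
  rw [key]
  field_simp
  ring

lemma orth (n : ℕ) {k k' : ℕ} (hk : k < n) (hk' : k' < n) :
    (∑ j : Fin n, Complex.sin (((((j:ℕ)+1)*(k+1) : ℕ) : ℂ) * θ n)
        * Complex.sin (((((j:ℕ)+1)*(k'+1) : ℕ) : ℂ) * θ n))
      = if k = k' then ((n:ℂ)+1)/2 else 0 := by
  set P : ℂ := ε n k * ε n k' with hP
  set R : ℂ := ε n k * (ε n k')⁻¹ with hR
  have hε0 := eps_ne_zero n k
  have hε0' := eps_ne_zero n k'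
  have hkey : ∀ j : Fin n,
      Complex.sin (((((j:ℕ)+1)*(k+1) : ℕ) : ℂ) * θ n)
        * Complex.sin (((((j:ℕ)+1)*(k'+1) : ℕ) : ℂ) * θ n)
      = -(1/4) * (P ^ ((j:ℕ)+1) + (P⁻¹) ^ ((j:ℕ)+1))
        + (1/4) * (R ^ ((j:ℕ)+1) + (R⁻¹) ^ ((j:ℕ)+1)) := by
    intro j
    set m := (j:ℕ)+1 with hm
    have e1 : P ^ m = (ε n k ^ m) * (ε n k' ^ m) := by rw [hP, mul_pow]
    have e2 : P⁻¹ ^ m = ((ε n k ^ m) * (ε n k' ^ m))⁻¹ := by rw [inv_pow, e1]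
    have e3 : R ^ m = (ε n k ^ m) * (ε n k' ^ m)⁻¹ := by rw [hR, mul_pow, inv_pow]
    have e4 : R⁻¹ ^ m = ((ε n k ^ m) * (ε n k' ^ m)⁻¹)⁻¹ := by rw [inv_pow, e3]
    rw [sin_expand, sin_expand, e1, e2, e3, e4, inv_pow, inv_pow]
    exact alg_aux _ _ (pow_ne_zero _ hε0) (pow_ne_zero _ hε0')
  rw [Finset.sum_congr rfl (fun j _ => hkey j)]
  rw [Finset.sum_add_distrib]
  simp only [← Finset.mul_sum, Finset.sum_add_distrib]
  have hw2 : ((-1:ℂ)) ^ (k+k'+2) * ((-1:ℂ)) ^ (k+k'+2) = 1 := by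
    rw [← pow_add, ← two_mul, pow_mul]; norm_num
  have hPw : P ^ (n+1) = (-1 : ℂ) ^ (k+k'+2) := by
    rw [hP, mul_pow, eps_pow, eps_pow, ← pow_add]
    congr 1; omega
  have hRw : R ^ (n+1) = (-1 : ℂ) ^ (k+k'+2) := by
    rw [hR, mul_pow, inv_pow, eps_pow, eps_pow, neg_one_pow_inv, ← pow_add]
    congr 1; omega
  have hP1 : P ≠ 1 := eps_mul_ne_one n hk hk'
  have hP0 : P ≠ 0 := mul_ne_zero hε0 hε0'
  have hPsum := sum_pow_pair n hP0 hP1 hPw hw2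
  by_cases hkk : k = k'
  · subst hkk
    have hR1 : R = 1 := by rw [hR, mul_inv_cancel₀ hε0]
    have hw1 : ((-1:ℂ)) ^ (k+k+2) = 1 := by
      rw [show k+k+2 = 2*(k+1) by ring, pow_mul]; norm_num
    rw [hw1] at hPsum
    rw [hR1, hPsum]
    simp only [inv_one, one_pow, if_pos rfl]
    rw [Finset.sum_const, Finset.card_univ, Fintype.card_fin]
    push_cast
    ring
  · have hR0 : R ≠ 0 := mul_ne_zero hε0 (inv_ne_zero hε0')
    have hR1 : R ≠ 1 := by
      intro h
      apply eps_ne n hk hk' hkk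
      rw [hR] at h
      exact (mul_inv_eq_one₀ hε0').mp h
    have hRsum := sum_pow_pair n hR0 hR1 hRw hw2
    rw [hPsum, hRsum, if_neg hkk]
    ring

end Grid2D

namespace Grid2D
open Matrix

/-- helper: sum over Fin n picking out a single index value -/
lemma sum_pick₁ {n : ℕ} (t : ℕ) (f : Fin n → ℂ) :
    (∑ r : Fin n, if t = (r:ℕ) then f r else 0) = if ht : t < n then f ⟨t, ht⟩ else 0 := by
  split_ifs with ht
  · rw [Finset.sum_eq_single (⟨t, ht⟩ : Fin n)]
    · simp
    · intro b _ hb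
      rw [if_neg]
      intro hc
      exact hb (by simp [Fin.ext_iff, ← hc])
    · simp
  · apply Finset.sum_eq_zero
    intro r _
    rw [if_neg]
    intro hc
    exact ht (hc ▸ r.isLt)

lemma sum_pick₂ {n : ℕ} (t : ℕ) (ht : t < n) (f : Fin n → ℂ) :
    (∑ r : Fin n, if (r:ℕ)+1 = t then f r else 0)
      = if h1 : 1 ≤ t then f ⟨t-1, by omega⟩ else 0 := by
  have : ∀ r : Fin n, (if (r:ℕ)+1 = t then f r else 0)
      = if 1 ≤ t then (if t-1 = (r:ℕ) then f r else 0) else 0 := by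
    intro r
    split_ifs with h h' h' <;> first | rfl | (exfalso; omega) | (rw [if_neg (by omega)]) | (rw [if_pos (by omega)])
  rw [Finset.sum_congr rfl (fun r _ => this r)]
  split_ifs with h1
  · rw [sum_pick₁, dif_pos (by omega : t - 1 < n)]
  · simp

lemma neg_one_pow_mul_self (i : ℕ) : (-1:ℂ)^i * (-1)^i = 1 := by
  rw [← pow_add, ← two_mul, pow_mul]; norm_num

lemma sign_odd {i j : ℕ} (h : (i + j) % 2 = 1) : (-1:ℂ)^i * (-1)^j = -1 := by
  obtain ⟨t, ht⟩ : ∃ t, i + j = 2*t + 1 := ⟨(i+j)/2, by omega⟩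
  rw [← pow_add, ht, pow_succ, pow_mul]
  norm_num

lemma K_apply (n : ℕ) (i j : Fin n) :
    tridiag n 1 0 i j = (if (i:ℕ)+1 = (j:ℕ) then 1 else 0) - (if (j:ℕ)+1 = (i:ℕ) then 1 else 0) := by
  simp only [tridiag, of_apply]
  split_ifs <;> first | (exfalso; omega) | norm_num

lemma tridiag_decomp (n : ℕ) (s z : ℂ) : tridiag n s z = z • (1 : Matrix (Fin n) (Fin n) ℂ) + s • tridiag n 1 0 := by
  ext i j
  simp only [tridiag, of_apply, Matrix.add_apply, Matrix.smul_apply, Matrix.one_apply,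
    smul_eq_mul, Fin.ext_iff]
  split_ifs <;> first | (exfalso; omega) | ring

lemma J_mul_J (n : ℕ) : antidiag n * antidiag n = 1 := by
  ext i j
  rw [Matrix.mul_apply]
  have : ∀ r : Fin n, antidiag n i r * antidiag n r j
      = if (n - 1 - (i:ℕ)) = (r:ℕ) then (if (r:ℕ)+(j:ℕ)+1 = n then (1:ℂ) else 0) else 0 := by
    intro r
    simp only [antidiag, of_apply]
    have hi := i.isLt
    have hr := r.isLt
    split_ifs <;> first | (exfalso; omega) | norm_num
  rw [Finset.sum_congr rfl (fun r _ => this r), sum_pick₁,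
    dif_pos (by have := i.isLt; omega : n - 1 - (i:ℕ) < n)]
  have hi := i.isLt
  have hj := j.isLt
  simp only [Matrix.one_apply, Fin.ext_iff]
  split_ifs <;> first | (exfalso; omega) | norm_num

lemma KJ_anticomm (n : ℕ) :
    tridiag n 1 0 * antidiag n = -(antidiag n * tridiag n 1 0) := by
  ext i j
  have hi := i.isLt
  have hj := j.isLt
  rw [Matrix.mul_apply, Matrix.neg_apply, Matrix.mul_apply]
  have h1 : ∀ r : Fin n, tridiag n 1 0 i r * antidiag n r j
      = if (n - 1 - (j:ℕ)) = (r:ℕ) then tridiag n 1 0 i r else 0 := by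
    intro r
    have hr := r.isLt
    simp only [antidiag, of_apply]
    split_ifs <;> first | (exfalso; omega) | ring
  have h2 : ∀ r : Fin n, antidiag n i r * tridiag n 1 0 r j
      = if (n - 1 - (i:ℕ)) = (r:ℕ) then tridiag n 1 0 r j else 0 := by
    intro r
    have hr := r.isLt
    simp only [antidiag, of_apply]
    split_ifs <;> first | (exfalso; omega) | ring
  rw [Finset.sum_congr rfl (fun r _ => h1 r), Finset.sum_congr rfl (fun r _ => h2 r),
    sum_pick₁, sum_pick₁, dif_pos (by omega : n - 1 - (j:ℕ) < n),
    dif_pos (by omega : n - 1 - (i:ℕ) < n)]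
  rw [K_apply, K_apply]
  simp only [Fin.val_mk]
  split_ifs <;> first | (exfalso; omega) | norm_num

end Grid2D

namespace Grid2D
open Matrix

noncomputable def Qmat (n : ℕ) : Matrix (Fin n) (Fin n) ℂ :=
  Matrix.of fun j k => I ^ ((j:ℕ)+1) * Complex.sin (((((j:ℕ)+1)*((k:ℕ)+1) : ℕ) : ℂ) * θ n)

noncomputable def Qinv (n : ℕ) : Matrix (Fin n) (Fin n) ℂ :=
  Matrix.of fun k j => (2/((n:ℂ)+1)) * (-I) ^ ((j:ℕ)+1)
    * Complex.sin (((((j:ℕ)+1)*((k:ℕ)+1) : ℕ) : ℂ) * θ n)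

noncomputable def Λmat (n : ℕ) : Matrix (Fin n) (Fin n) ℂ :=
  Matrix.diagonal fun k => 2 * I * Complex.cos ((((k:ℕ)+1 : ℕ) : ℂ) * θ n)

lemma Qinv_mul_Q (n : ℕ) : Qinv n * Qmat n = 1 := by
  ext k k'
  rw [Matrix.mul_apply]
  have hstep : ∀ j : Fin n, Qinv n k j * Qmat n j k'
      = (2/((n:ℂ)+1)) * (Complex.sin (((((j:ℕ)+1)*((k:ℕ)+1) : ℕ) : ℂ) * θ n)
          * Complex.sin (((((j:ℕ)+1)*((k':ℕ)+1) : ℕ) : ℂ) * θ n)) := by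
    intro j
    simp only [Qinv, Qmat, of_apply]
    have hI : (-I) ^ ((j:ℕ)+1) * I ^ ((j:ℕ)+1) = 1 := by
      rw [← mul_pow]
      simp [Complex.I_mul_I]
    calc (2/((n:ℂ)+1)) * (-I) ^ ((j:ℕ)+1) * Complex.sin (((((j:ℕ)+1)*((k:ℕ)+1) : ℕ) : ℂ) * θ n)
          * (I ^ ((j:ℕ)+1) * Complex.sin (((((j:ℕ)+1)*((k':ℕ)+1) : ℕ) : ℂ) * θ n))
        = ((-I) ^ ((j:ℕ)+1) * I ^ ((j:ℕ)+1)) * ((2/((n:ℂ)+1)) * (Complex.sin (((((j:ℕ)+1)*((k:ℕ)+1) : ℕ) : ℂ) * θ n)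
          * Complex.sin (((((j:ℕ)+1)*((k':ℕ)+1) : ℕ) : ℂ) * θ n))) := by ring
      _ = _ := by rw [hI, one_mul]
  rw [Finset.sum_congr rfl (fun j _ => hstep j), ← Finset.mul_sum,
    orth n k.isLt k'.isLt]
  have hn : ((n:ℂ)+1) ≠ 0 := by
    have : ((n+1 : ℕ) : ℂ) ≠ 0 := Nat.cast_ne_zero.mpr (Nat.succ_ne_zero n)
    push_cast at this; exact this
  simp only [Matrix.one_apply, Fin.ext_iff]
  split_ifs with h
  · field_simp
  · ring

lemma Q_mul_Qinv (n : ℕ) : Qmat n * Qinv n = 1 :=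
  mul_eq_one_comm.mpr (Qinv_mul_Q n)

/-- the extended eigenvector entries -/
noncomputable def vf (n m k : ℕ) : ℂ := I ^ m * Complex.sin (((m*(k+1) : ℕ) : ℂ) * θ n)

lemma vf_zero (n k : ℕ) : vf n 0 k = 0 := by
  simp [vf]

lemma vf_top (n k : ℕ) : vf n (n+1) k = 0 := by
  rw [vf]
  have harg : (((n+1)*(k+1) : ℕ) : ℂ) * θ n = ((k+1 : ℕ) : ℂ) * (Real.pi : ℂ) := by
    rw [θ, θr]
    have hn : ((n:ℂ) + 1) ≠ 0 := by
      have : ((n+1 : ℕ) : ℂ) ≠ 0 := Nat.cast_ne_zero.mpr (Nat.succ_ne_zero n)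
      push_cast at this; exact this
    push_cast
    field_simp
  rw [harg, Complex.sin_nat_mul_pi, mul_zero]

lemma vf_rec (n m k : ℕ) :
    vf n (m+2) k - vf n m k = vf n (m+1) k * (2 * I * Complex.cos ((((k:ℕ)+1 : ℕ) : ℂ) * θ n)) := by
  simp only [vf]
  have h1 : (((m+2)*(k+1) : ℕ) : ℂ) * θ n = (((m+1)*(k+1) : ℕ) : ℂ) * θ n + ((k+1 : ℕ) : ℂ) * θ n := by
    push_cast; ring
  have h2 : ((m*(k+1) : ℕ) : ℂ) * θ n = (((m+1)*(k+1) : ℕ) : ℂ) * θ n - ((k+1 : ℕ) : ℂ) * θ n := by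
    push_cast; ring
  rw [h1, h2, Complex.sin_add, Complex.sin_sub]
  have hI2 : I ^ (m+2) = -I^m := by
    rw [pow_add, Complex.I_sq]; ring
  rw [hI2, pow_succ]
  linear_combination (-2 * I^m * Complex.sin ((((m+1)*(k+1) : ℕ) : ℂ) * θ n)
    * Complex.cos (((k+1 : ℕ) : ℂ) * θ n)) * Complex.I_sq

lemma K_mul_Q (n : ℕ) : tridiag n 1 0 * Qmat n = Qmat n * Λmat n := by
  ext j k
  rw [Matrix.mul_apply, Λmat, Matrix.mul_diagonal]
  have hsum : ∀ r : Fin n, tridiag n 1 0 j r * Qmat n r k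
      = (if (j:ℕ)+1 = (r:ℕ) then Qmat n r k else 0)
        - (if (r:ℕ)+1 = (j:ℕ) then Qmat n r k else 0) := by
    intro r
    rw [K_apply]
    split_ifs <;> first | (exfalso; omega) | ring
  rw [Finset.sum_congr rfl (fun r _ => hsum r), Finset.sum_sub_distrib,
    sum_pick₁ ((j:ℕ)+1) (fun r => Qmat n r k), sum_pick₂ (j:ℕ) j.isLt (fun r => Qmat n r k)]
  have hQv : Qmat n j k = vf n ((j:ℕ)+1) k := rfl
  have e1 : (if ht : (j:ℕ)+1 < n then Qmat n ⟨(j:ℕ)+1, ht⟩ k else 0) = vf n ((j:ℕ)+2) k := by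
    split_ifs with h
    · rfl
    · have hj : (j:ℕ)+2 = n+1 := by have := j.isLt; omega
      rw [hj, vf_top]
  have e2 : (if h1 : 1 ≤ (j:ℕ) then Qmat n ⟨(j:ℕ)-1, by omega⟩ k else 0) = vf n (j:ℕ) k := by
    split_ifs with h
    · show vf n ((j:ℕ)-1+1) k = vf n (j:ℕ) k
      rw [show (j:ℕ)-1+1 = (j:ℕ) by omega]
    · rw [show (j:ℕ) = 0 by omega, vf_zero]
  rw [e1, e2, hQv]
  exact vf_rec n (j:ℕ) (k:ℕ)

end Grid2D

namespace Grid2D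
open Matrix Polynomial

noncomputable def Emat (n : ℕ) : Matrix (Fin n) (Fin n) ℂ :=
  Matrix.diagonal fun i => (-1 : ℂ)^(i:ℕ)

lemma E_mul_E (n : ℕ) : Emat n * Emat n = 1 := by
  rw [Emat, diagonal_mul_diagonal]
  rw [show (fun i : Fin n => (-1:ℂ)^(i:ℕ) * (-1)^(i:ℕ)) = fun _ => 1 by
    funext i; exact neg_one_pow_mul_self _]
  exact diagonal_one

lemma E_K_E (n : ℕ) : Emat n * tridiag n 1 0 * Emat n = -(tridiag n 1 0) := by
  ext i j
  rw [Matrix.neg_apply, Emat, Matrix.mul_diagonal, Matrix.diagonal_mul, K_apply]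
  split_ifs with h1 h2 h2
  · exfalso; omega
  · have hs := sign_odd (i := (i:ℕ)) (j := (j:ℕ)) (by omega)
    linear_combination hs
  · have hs := sign_odd (i := (i:ℕ)) (j := (j:ℕ)) (by omega)
    linear_combination -hs
  · ring

lemma E_J_E {n : ℕ} (hn : n % 2 = 0) : Emat n * antidiag n * Emat n = -(antidiag n) := by
  ext i j
  rw [Matrix.neg_apply, Emat, Matrix.mul_diagonal, Matrix.diagonal_mul]
  simp only [antidiag, of_apply]
  split_ifs with h
  · have hs := sign_odd (i := (i:ℕ)) (j := (j:ℕ)) (by omega)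
    linear_combination hs
  · ring

lemma N_sq (n : ℕ) (a μ : ℂ) :
    (a • tridiag n 1 0 + μ • antidiag n) * (a • tridiag n 1 0 + μ • antidiag n)
      = (a*a) • (tridiag n 1 0 * tridiag n 1 0) + (μ*μ) • (1 : Matrix (Fin n) (Fin n) ℂ) := by
  rw [add_mul, mul_add, mul_add]
  simp only [smul_mul_assoc, mul_smul_comm, KJ_anticomm, J_mul_J, smul_smul, smul_neg]
  abel_nf
  module

lemma E_N_E (n : ℕ) (hn : n % 2 = 0) (a μ : ℂ) :
    Emat n * (a • tridiag n 1 0 + μ • antidiag n) * Emat n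
      = -(a • tridiag n 1 0 + μ • antidiag n) := by
  rw [mul_add, add_mul]
  simp only [mul_smul_comm, smul_mul_assoc]
  rw [E_K_E, E_J_E hn]
  simp only [smul_neg, neg_add]

end Grid2D


namespace Grid2D
open Matrix Polynomial

noncomputable def lam (n k : ℕ) : ℂ := 2 * I * Complex.cos ((((k:ℕ)+1 : ℕ) : ℂ) * θ n)

lemma Λmat_diag (n : ℕ) : Λmat n = Matrix.diagonal (fun k : Fin n => lam n (k:ℕ)) := rfl

lemma n_theta (n : ℕ) : ((n:ℂ)+1) * θ n = (Real.pi : ℂ) := by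
  have hn : ((n:ℂ) + 1) ≠ 0 := by
    have : ((n+1 : ℕ) : ℂ) ≠ 0 := Nat.cast_ne_zero.mpr (Nat.succ_ne_zero n)
    push_cast at this; exact this
  rw [θ, θr]
  push_cast
  rw [mul_comm, div_mul_cancel₀ _ hn]

lemma lam_reflect (n k : ℕ) (hk : k < n) : lam n (n-1-k) = -(lam n k) := by
  rw [lam, lam]
  have harg : (((n-1-k)+1 : ℕ) : ℂ) * θ n = (Real.pi : ℂ) - ((k+1 : ℕ) : ℂ) * θ n := by
    rw [show (n-1-k)+1 = n-k from by omega, ← n_theta n]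
    push_cast [Nat.cast_sub hk.le]
    ring
  rw [harg, Complex.cos_pi_sub]
  ring

noncomputable def Fpoly (n : ℕ) (a μ : ℂ) (k : ℕ) : ℂ[X] :=
  X^2 - C (a^2 * (lam n k)^2 + μ^2)

lemma Fpoly_monic (n : ℕ) (a μ : ℂ) (k : ℕ) : (Fpoly n a μ k).Monic := by
  rw [Fpoly, sub_eq_add_neg]
  apply monic_X_pow_add
  rw [degree_neg]
  refine lt_of_le_of_lt degree_C_le ?_
  norm_num

lemma Fpoly_reflect (n : ℕ) (a μ : ℂ) (k : ℕ) (hk : k < n) :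
    Fpoly n a μ (n-1-k) = Fpoly n a μ k := by
  rw [Fpoly, Fpoly, lam_reflect n k hk, neg_sq]

lemma map_smul_C {n : ℕ} (c : ℂ) (M : Matrix (Fin n) (Fin n) ℂ) :
    (C : ℂ →+* ℂ[X]).mapMatrix (c • M) = C c • (C : ℂ →+* ℂ[X]).mapMatrix M := by
  ext i j
  simp [RingHom.mapMatrix_apply, Matrix.map_apply, Matrix.smul_apply, smul_eq_mul]

set_option maxHeartbeats 2000000 in
lemma det_block (L : ℕ) (x a μ : ℂ) :
    (x • (1 : Matrix (Fin (2*L)) (Fin (2*L)) ℂ)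
        + (a • tridiag (2*L) 1 0 + μ • antidiag (2*L))).det
      = ∏ k ∈ Finset.range L, (x^2 - (a^2 * (lam (2*L) k)^2 + μ^2)) := by
  set n := 2*L with hn
  have hn2 : n % 2 = 0 := by omega
  set K : Matrix (Fin n) (Fin n) ℂ := tridiag n 1 0 with hK
  set J : Matrix (Fin n) (Fin n) ℂ := antidiag n with hJ
  set N : Matrix (Fin n) (Fin n) ℂ := a • K + μ • J with hN
  set φ : Matrix (Fin n) (Fin n) ℂ →+* Matrix (Fin n) (Fin n) ℂ[X] :=
    (C : ℂ →+* ℂ[X]).mapMatrix with hφ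
  set Np : Matrix (Fin n) (Fin n) ℂ[X] := φ N with hNp
  set P : Matrix (Fin n) (Fin n) ℂ[X] := (X : ℂ[X]) • 1 + Np with hP
  -- p is monic
  have hchar : (-N).charpoly = P.det := by
    rw [Matrix.charpoly]
    congr 1
    ext i j
    rw [charmatrix_apply]
    simp only [hP, hNp, hφ, Matrix.add_apply, Matrix.smul_apply, Matrix.one_apply,
      RingHom.mapMatrix_apply, Matrix.map_apply, Matrix.neg_apply, diagonal_apply, _root_.map_neg,
      smul_eq_mul]
    split_ifs <;> ring
  have hmonic : P.det.Monic := hchar ▸ Matrix.charpoly_monic (-N)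
  -- symmetric under negation
  set Ep : Matrix (Fin n) (Fin n) ℂ[X] := φ (Emat n) with hEp
  have hEE : Ep * Ep = 1 := by rw [hEp, ← _root_.map_mul, E_mul_E, _root_.map_one]
  have hENE : Ep * Np * Ep = -Np := by
    have hene := E_N_E n hn2 a μ
    rw [← hK, ← hJ, ← hN] at hene
    rw [hEp, hNp, ← _root_.map_mul, ← _root_.map_mul, hene, _root_.map_neg]
  have h1 : Ep * P * Ep = (X : ℂ[X]) • 1 - Np := by
    rw [hP, mul_add, add_mul, mul_smul_comm, mul_one, smul_mul_assoc, hEE, hENE,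
      sub_eq_add_neg]
  have hdetE : Ep.det * Ep.det = 1 := by rw [← det_mul, hEE, det_one]
  have hsym : P.det = ((X : ℂ[X]) • 1 - Np).det := by
    have h2 := congrArg Matrix.det h1
    rw [det_mul, det_mul] at h2
    calc P.det = (Ep.det * Ep.det) * P.det := by rw [hdetE, one_mul]
      _ = Ep.det * P.det * Ep.det := by ring
      _ = ((X : ℂ[X]) • 1 - Np).det := h2
  -- square of p
  have hcomm : P * ((X : ℂ[X]) • 1 - Np) = (X * X : ℂ[X]) • 1 - φ (N * N) := by
    rw [_root_.map_mul, ← hNp, hP, mul_sub, add_mul, add_mul, smul_mul_assoc, smul_mul_assoc,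
      mul_smul_comm, mul_smul_comm, smul_smul]
    simp only [one_mul, mul_one]
    try abel
  have hsq : P.det * P.det = ((X * X : ℂ[X]) • 1 - φ (N * N)).det := by
    nth_rewrite 2 [hsym]
    rw [← det_mul, hcomm]
  -- compute N * N and G
  have hNN : φ (N * N) = C (a*a) • φ (K * K) + C (μ*μ) • 1 := by
    have hNsq := N_sq n a μ
    rw [← hK, ← hJ, ← hN] at hNsq
    rw [hNsq, _root_.map_add, hφ, map_smul_C, map_smul_C, _root_.map_one]
  set c2 : ℂ[X] := X * X - C (μ*μ) with hc2
  have hG : (X * X : ℂ[X]) • 1 - φ (N * N) = c2 • 1 - C (a*a) • (φ K * φ K) := by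
    rw [hNN, hc2, sub_smul, _root_.map_mul φ K K]
    abel
  -- diagonalize
  set Qp : Matrix (Fin n) (Fin n) ℂ[X] := φ (Qmat n) with hQp
  set Qip : Matrix (Fin n) (Fin n) ℂ[X] := φ (Qinv n) with hQip
  set Λp : Matrix (Fin n) (Fin n) ℂ[X] := φ (Λmat n) with hΛp
  have hKQ : φ K * Qp = Qp * Λp := by
    have hkq := K_mul_Q n
    rw [← hK] at hkq
    rw [hQp, hΛp, ← _root_.map_mul, ← _root_.map_mul, hkq]
  have hQQ : Qp * Qip = 1 := by rw [hQp, hQip, ← _root_.map_mul, Q_mul_Qinv, _root_.map_one]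
  set Rm : Matrix (Fin n) (Fin n) ℂ[X] := c2 • 1 - C (a*a) • (Λp * Λp) with hRm
  have hGQ : (c2 • 1 - C (a*a) • (φ K * φ K)) * Qp = Qp * Rm := by
    rw [hRm, sub_mul, mul_sub, smul_mul_assoc, one_mul, mul_smul_comm, mul_one,
      smul_mul_assoc, mul_smul_comm]
    rw [show φ K * φ K * Qp = Qp * (Λp * Λp) by rw [mul_assoc, hKQ, ← mul_assoc, hKQ, mul_assoc]]
  have hdetQ : Qp.det * Qip.det = 1 := by rw [← det_mul, hQQ, det_one]
  have hdetG : ((X * X : ℂ[X]) • 1 - φ (N * N)).det = Rm.det := by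
    rw [hG]
    have h3 := congrArg Matrix.det hGQ
    rw [det_mul, det_mul] at h3
    calc (c2 • 1 - C (a*a) • (φ K * φ K)).det
        = (c2 • 1 - C (a*a) • (φ K * φ K)).det * (Qp.det * Qip.det) := by
          rw [hdetQ, mul_one]
      _ = (Qp.det * Rm.det) * Qip.det := by rw [← h3]; ring
      _ = Rm.det * (Qp.det * Qip.det) := by ring
      _ = Rm.det := by rw [hdetQ, mul_one]
  -- Rm is diagonal
  have hRdiag : Rm = Matrix.diagonal (fun k : Fin n => Fpoly n a μ (k:ℕ)) := by
    rw [hRm, hΛp, Λmat_diag]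
    ext i j
    simp only [hφ, RingHom.mapMatrix_apply, Matrix.map_apply, Matrix.sub_apply,
      Matrix.smul_apply, Matrix.one_apply, diagonal_map (map_zero C), diagonal_mul_diagonal,
      diagonal_apply, smul_eq_mul, Fpoly]
    split_ifs with h
    · rw [hc2]
      simp only [_root_.map_add, _root_.map_mul, map_pow]
      ring
    · ring
  have hdetR : Rm.det = ∏ k ∈ Finset.range n, Fpoly n a μ k := by
    rw [hRdiag, det_diagonal]
    exact Fin.prod_univ_eq_prod_range (fun k => Fpoly n a μ k) n
  -- pairing
  set q : ℂ[X] := ∏ k ∈ Finset.range L, Fpoly n a μ k with hq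
  have hqq : q * q = ∏ k ∈ Finset.range n, Fpoly n a μ k := by
    rw [show Finset.range n = Finset.range (L+L) from by rw [hn, two_mul],
      Finset.prod_range_add, ← hq]
    congr 1
    rw [← Finset.prod_range_reflect (fun k => Fpoly n a μ (L + k)) L, hq]
    apply Finset.prod_congr rfl
    intro j hj
    have hjL : j < L := Finset.mem_range.mp hj
    rw [show L + (L - 1 - j) = n - 1 - j from by omega, Fpoly_reflect n a μ j (by omega)]
  have hpq : P.det * P.det = q * q := by rw [hsq, hdetG, hdetR, hqq]
  have hqmonic : q.Monic := monic_prod_of_monic _ _ (fun k _ => Fpoly_monic n a μ k)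
  have hfac : (P.det - q) * (P.det + q) = 0 := by linear_combination hpq
  have hpq2 : P.det = q := by
    rcases mul_eq_zero.mp hfac with h | h
    · exact sub_eq_zero.mp h
    · exfalso
      have hpneg : P.det = -q := by linear_combination h
      have : (1 : ℂ) = -1 := by
        calc (1 : ℂ) = P.det.leadingCoeff := hmonic.leadingCoeff.symm
          _ = (-q).leadingCoeff := by rw [hpneg]
          _ = -q.leadingCoeff := leadingCoeff_neg q
          _ = -1 := by rw [hqmonic.leadingCoeff]
      norm_num at this
  -- evaluate at x
  have heval : (x • (1 : Matrix (Fin n) (Fin n) ℂ) + N).det = P.det.eval x := by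
    have h4 := RingHom.map_det (evalRingHom x) P
    rw [show P.det.eval x = (evalRingHom x) P.det from rfl, h4]
    congr 1
    ext i j
    simp only [hP, hNp, hφ, RingHom.mapMatrix_apply, Matrix.map_apply, Matrix.add_apply,
      Matrix.smul_apply, Matrix.one_apply, smul_eq_mul, Matrix.map_apply]
    split_ifs <;> simp
  rw [heval, hpq2, hq, eval_prod]
  apply Finset.prod_congr rfl
  intro k _
  rw [Fpoly]
  simp

end Grid2D

namespace Grid2D
open Matrix Polynomial

lemma lam_sq (n k : ℕ) :
    (lam n k)^2 = (-4 : ℂ) * ((Real.cos (((k:ℝ)+1) * Real.pi / ((n:ℝ)+1)) : ℝ) : ℂ)^2 := by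
  rw [lam]
  have harg : (((k:ℕ)+1 : ℕ) : ℂ) * θ n = ((((k:ℝ)+1) * Real.pi / ((n:ℝ)+1) : ℝ) : ℂ) := by
    rw [θ, θr]; push_cast; ring
  rw [harg, ← Complex.ofReal_cos]
  linear_combination (4 * (((Real.cos (((k:ℝ)+1) * Real.pi / ((n:ℝ)+1)) : ℝ) : ℂ))^2) * Complex.I_sq

lemma kron_block (m l : ℕ) (A Jm : Matrix (Fin l) (Fin l) ℂ) (d : Fin m → ℂ) :
    (1 : Matrix (Fin m) (Fin m) ℂ) ⊗ₖ A + (Matrix.diagonal d) ⊗ₖ Jm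
      = (Matrix.blockDiagonal (fun s : Fin m => A + d s • Jm)).submatrix
          (Equiv.prodComm (Fin m) (Fin l)) (Equiv.prodComm (Fin m) (Fin l)) := by
  ext ⟨s, i⟩ ⟨t, j⟩
  simp only [Matrix.add_apply, Matrix.kroneckerMap_apply, Matrix.one_apply,
    Matrix.diagonal_apply, Matrix.submatrix_apply, Equiv.prodComm_apply, Prod.swap_prod_mk,
    Matrix.blockDiagonal_apply, Matrix.smul_apply, smul_eq_mul]
  split_ifs with h1 h2 h2 <;> first | (exfalso; exact h2 h1.symm) | (exfalso; exact h1 h2.symm) | ring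

end Grid2D

namespace Grid2D
open Matrix Polynomial

lemma factor_cast (L M s k : ℕ) (a b x : ℝ) :
    (x:ℂ)^2 - ((a:ℂ)^2 * (lam (2*L) k)^2 + ((b:ℂ) * lam (2*M) s)^2)
      = ((x^2 + 4*a^2*Real.cos (((1+k : ℕ):ℝ) * Real.pi / (2*(L:ℝ)+1))^2
          + 4*b^2*Real.cos (((1+s : ℕ):ℝ) * Real.pi / (2*(M:ℝ)+1))^2 : ℝ) : ℂ) := by
  have hk : ((1+k : ℕ):ℝ) * Real.pi / (2*(L:ℝ)+1) = ((k:ℝ)+1) * Real.pi / (((2*L : ℕ):ℝ)+1) := by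
    push_cast; ring_nf
  have hs : ((1+s : ℕ):ℝ) * Real.pi / (2*(M:ℝ)+1) = ((s:ℝ)+1) * Real.pi / (((2*M : ℕ):ℝ)+1) := by
    push_cast; ring_nf
  rw [hk, hs, mul_pow, lam_sq, lam_sq]
  push_cast
  ring

end Grid2D


open Grid2D Matrix Polynomial Complex

set_option maxHeartbeats 1600000

/-- The partition function of the monopole-dimer model on the two-dimensional grid graph
`P_{2L} □ P_{2M}` with vertex weights `x` and edge weights `a` and `b`:
`det(I_m ⊗ T_ℓ(-a,x,a) + T_m(-b,0,b) ⊗ J_ℓ) = ∏_{s=1}^{M} ∏_{k=1}^{L}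
(x² + 4a² cos²(kπ/(2L+1)) + 4b² cos²(sπ/(2M+1)))²` for `ℓ = 2L`, `m = 2M`. -/
theorem det_grid2d (L M : ℕ) (hL : 0 < L) (hM : 0 < M) (a b x : ℝ) :
    ((1 : Matrix (Fin (2 * M)) (Fin (2 * M)) ℂ) ⊗ₖ tridiag (2 * L) a x
        + tridiag (2 * M) b 0 ⊗ₖ antidiag (2 * L)).det =
      ∏ s ∈ Finset.Icc 1 M, ∏ k ∈ Finset.Icc 1 L,
        (((x ^ 2 + 4 * a ^ 2 * Real.cos ((k : ℝ) * Real.pi / (2 * (L : ℝ) + 1)) ^ 2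
          + 4 * b ^ 2 * Real.cos ((s : ℝ) * Real.pi / (2 * (M : ℝ) + 1)) ^ 2 : ℝ) : ℂ)) ^ 2 := by
  classical
  -- abbreviations
  have hQQ := Qinv_mul_Q (2*M)
  set A : Matrix (Fin (2*L)) (Fin (2*L)) ℂ := tridiag (2*L) (a:ℂ) (x:ℂ) with hA
  set B : Matrix (Fin (2*M)) (Fin (2*M)) ℂ := tridiag (2*M) (b:ℂ) 0 with hB
  set Jl : Matrix (Fin (2*L)) (Fin (2*L)) ℂ := antidiag (2*L) with hJl
  set d : Fin (2*M) → ℂ := fun s => (b:ℂ) * lam (2*M) (s:ℕ) with hd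
  have hBdec : B = (b:ℂ) • tridiag (2*M) 1 0 := by
    rw [hB, tridiag_decomp]
    simp
  have hQBQ : Qinv (2*M) * B * Qmat (2*M) = Matrix.diagonal d := by
    rw [hBdec, mul_smul_comm, smul_mul_assoc, mul_assoc, K_mul_Q, ← mul_assoc, hQQ, one_mul,
      Λmat_diag]
    ext i j
    simp only [Matrix.smul_apply, diagonal_apply, hd, smul_eq_mul]
    split_ifs <;> ring
  -- conjugation
  have hconj : (Qinv (2*M) ⊗ₖ (1 : Matrix (Fin (2*L)) (Fin (2*L)) ℂ))
        * ((1 : Matrix (Fin (2*M)) (Fin (2*M)) ℂ) ⊗ₖ A + B ⊗ₖ Jl) * (Qmat (2*M) ⊗ₖ 1)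
      = (1 : Matrix (Fin (2*M)) (Fin (2*M)) ℂ) ⊗ₖ A + (Matrix.diagonal d) ⊗ₖ Jl := by
    rw [mul_add, add_mul, ← mul_kronecker_mul, ← mul_kronecker_mul, ← mul_kronecker_mul,
      ← mul_kronecker_mul]
    simp only [one_mul, mul_one]
    rw [hQQ, hQBQ]
  have hone : (Qinv (2*M) ⊗ₖ (1 : Matrix (Fin (2*L)) (Fin (2*L)) ℂ)) * (Qmat (2*M) ⊗ₖ 1) = 1 := by
    rw [← mul_kronecker_mul, hQQ, mul_one, one_kronecker_one]
  have hdet1 : (Qinv (2*M) ⊗ₖ (1 : Matrix (Fin (2*L)) (Fin (2*L)) ℂ)).det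
      * (Qmat (2*M) ⊗ₖ (1 : Matrix (Fin (2*L)) (Fin (2*L)) ℂ)).det = 1 := by
    rw [← det_mul, hone, det_one]
  have hdetconj : ((1 : Matrix (Fin (2*M)) (Fin (2*M)) ℂ) ⊗ₖ A + B ⊗ₖ Jl).det
      = ((1 : Matrix (Fin (2*M)) (Fin (2*M)) ℂ) ⊗ₖ A + (Matrix.diagonal d) ⊗ₖ Jl).det := by
    have h2 := congrArg Matrix.det hconj
    rw [det_mul, det_mul] at h2
    calc ((1 : Matrix (Fin (2*M)) (Fin (2*M)) ℂ) ⊗ₖ A + B ⊗ₖ Jl).det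
        = ((Qinv (2*M) ⊗ₖ (1 : Matrix (Fin (2*L)) (Fin (2*L)) ℂ)).det
            * (Qmat (2*M) ⊗ₖ (1 : Matrix (Fin (2*L)) (Fin (2*L)) ℂ)).det)
          * ((1 : Matrix (Fin (2*M)) (Fin (2*M)) ℂ) ⊗ₖ A + B ⊗ₖ Jl).det := by
          rw [hdet1, one_mul]
      _ = (Qinv (2*M) ⊗ₖ (1 : Matrix (Fin (2*L)) (Fin (2*L)) ℂ)).det
            * ((1 : Matrix (Fin (2*M)) (Fin (2*M)) ℂ) ⊗ₖ A + B ⊗ₖ Jl).det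
            * (Qmat (2*M) ⊗ₖ (1 : Matrix (Fin (2*L)) (Fin (2*L)) ℂ)).det := by ring
      _ = _ := h2
  -- block diagonal determinant
  have hblock : ((1 : Matrix (Fin (2*M)) (Fin (2*M)) ℂ) ⊗ₖ A + (Matrix.diagonal d) ⊗ₖ Jl).det
      = ∏ s : Fin (2*M), (A + d s • Jl).det := by
    rw [kron_block, det_submatrix_equiv_self, det_blockDiagonal]
  -- per-block evaluation
  have hperblock : ∀ s : Fin (2*M), (A + d s • Jl).det
      = ∏ k ∈ Finset.range L, ((x:ℂ)^2 - ((a:ℂ)^2 * (lam (2*L) k)^2 + (d s)^2)) := by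
    intro s
    have hAd : A + d s • Jl
        = (x:ℂ) • (1 : Matrix (Fin (2*L)) (Fin (2*L)) ℂ)
          + ((a:ℂ) • tridiag (2*L) 1 0 + d s • antidiag (2*L)) := by
      rw [hA, tridiag_decomp, hJl, add_assoc]
    rw [hAd, det_block L (x:ℂ) (a:ℂ) (d s)]
  -- assemble product over s
  set g : ℕ → ℂ := fun s => ∏ k ∈ Finset.range L,
    ((x:ℂ)^2 - ((a:ℂ)^2 * (lam (2*L) k)^2 + ((b:ℂ) * lam (2*M) s)^2)) with hg
  have hprod : ((1 : Matrix (Fin (2*M)) (Fin (2*M)) ℂ) ⊗ₖ A + B ⊗ₖ Jl).det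
      = ∏ s ∈ Finset.range (2*M), g s := by
    rw [hdetconj, hblock, ← Fin.prod_univ_eq_prod_range g (2*M)]
    exact Finset.prod_congr rfl (fun s _ => hperblock s)
  -- pairing in s
  have hgrefl : ∀ s < 2*M, g (2*M - 1 - s) = g s := by
    intro s hs
    rw [hg]
    apply Finset.prod_congr rfl
    intro k _
    rw [lam_reflect (2*M) s hs, mul_neg, neg_sq]
  have hpair : ∏ s ∈ Finset.range (2*M), g s = ∏ s ∈ Finset.range M, (g s * g s) := by
    rw [show Finset.range (2*M) = Finset.range (M+M) from by rw [two_mul],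
      Finset.prod_range_add]
    have h5 : ∏ s ∈ Finset.range M, g (M + s) = ∏ s ∈ Finset.range M, g s := by
      rw [← Finset.prod_range_reflect (fun s => g (M + s)) M]
      apply Finset.prod_congr rfl
      intro s hs
      have hsM : s < M := Finset.mem_range.mp hs
      rw [show M + (M - 1 - s) = 2*M - 1 - s from by omega, hgrefl s (by omega)]
    rw [h5, ← Finset.prod_mul_distrib]
  -- right-hand side reindexing
  have hRHS : (∏ s ∈ Finset.Icc 1 M, ∏ k ∈ Finset.Icc 1 L,
        (((x ^ 2 + 4 * a ^ 2 * Real.cos ((k : ℝ) * Real.pi / (2 * (L : ℝ) + 1)) ^ 2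
          + 4 * b ^ 2 * Real.cos ((s : ℝ) * Real.pi / (2 * (M : ℝ) + 1)) ^ 2 : ℝ) : ℂ)) ^ 2)
      = ∏ s ∈ Finset.range M, ∏ k ∈ Finset.range L,
        (((x ^ 2 + 4 * a ^ 2 * Real.cos (((1+k : ℕ) : ℝ) * Real.pi / (2 * (L : ℝ) + 1)) ^ 2
          + 4 * b ^ 2 * Real.cos (((1+s : ℕ) : ℝ) * Real.pi / (2 * (M : ℝ) + 1)) ^ 2 : ℝ) : ℂ)) ^ 2 := by
    rw [← Finset.Ico_add_one_right_eq_Icc, Finset.prod_Ico_eq_prod_range]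
    simp only [Nat.succ_sub_one, Nat.add_sub_cancel]
    apply Finset.prod_congr rfl
    intro s _
    rw [← Finset.Ico_add_one_right_eq_Icc, Finset.prod_Ico_eq_prod_range]
    simp only [Nat.succ_sub_one, Nat.add_sub_cancel]
  rw [hprod, hpair, hRHS]
  apply Finset.prod_congr rfl
  intro s _
  rw [← Finset.prod_mul_distrib]
  apply Finset.prod_congr rfl
  intro k _
  rw [← sq, factor_cast L M s k a b x]
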